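/- Every rich square G satisfies χ(G) ≤ 4. -/

import Mathlib

open SimpleGraph

/-- A witness that the graph `H` is (exactly) a subdivision of `K₄`: four distinct branch
vertices joined by six internally disjoint paths of length at least one, covering all
vertices and edges of `H`. -/
structure K4Subdivision {W : Type*} (H : SimpleGraph W) : Type _ where
  b : Fin 4 → W
  inj : Function.Injective b
  p : ∀ i j : Fin 4, i < j → H.Walk (b i) (b j)
  isPath : ∀ (i j : Fin 4) (h : i < j), (p i j h).IsPath
  len : ∀ (i j : Fin 4) (h : i < j), 1 ≤ (p i j h).length
  disj : ∀ (i j : Fin 4) (h : i < j), ∀ (k l : Fin 4) (h' : k < l), (i, j) ≠ (k, l) → ∀ v,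
      v ∈ (p i j h).support → v ∈ (p k l h').support → v = b i ∨ v = b j
  coverV : ∀ v, ∃ (i j : Fin 4) (h : i < j), v ∈ (p i j h).support
  coverE : ∀ e ∈ H.edgeSet, ∃ (i j : Fin 4) (h : i < j), e ∈ (p i j h).edges

/-- A graph is ISK4-free if no induced subgraph is a subdivision of `K₄`. -/
def ISK4Free {V : Type*} (G : SimpleGraph V) : Prop :=
  ∀ s : Set V, IsEmpty (K4Subdivision (G.induce s))

/-- `G` has no induced `K_{3,3}`. -/
def K33Free {V : Type*} (G : SimpleGraph V) : Prop :=
  IsEmpty (completeBipartiteGraph (Fin 3) (Fin 3) ↪g G)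

/-- `G` has no induced `K_{2,2,2}` (octahedron). -/
def K222Free {V : Type*} (G : SimpleGraph V) : Prop :=
  IsEmpty (completeMultipartiteGraph (fun _ : Fin 3 => Fin 2) ↪g G)

/-- A witness that `H` is (exactly) a prism: three vertex-disjoint paths of length at least
one whose ends form two triangles, with no other edges. -/
structure PrismStruct {W : Type*} (H : SimpleGraph W) : Type _ where
  a : Fin 3 → W
  b : Fin 3 → W
  p : ∀ i, H.Walk (a i) (b i)
  isPath : ∀ i, (p i).IsPath
  len : ∀ i, 1 ≤ (p i).length
  triA : ∀ i j, i ≠ j → H.Adj (a i) (a j)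
  triB : ∀ i j, i ≠ j → H.Adj (b i) (b j)
  disj : ∀ i j, i ≠ j → ∀ v, v ∈ (p i).support → v ∉ (p j).support
  coverV : ∀ v, ∃ i, v ∈ (p i).support
  coverE : ∀ e ∈ H.edgeSet, (∃ i, e ∈ (p i).edges) ∨
      (∃ i j, i ≠ j ∧ e = s(a i, a j)) ∨ (∃ i j, i ≠ j ∧ e = s(b i, b j))

/-- `G` has no induced prism. -/
def PrismFree {V : Type*} (G : SimpleGraph V) : Prop :=
  ∀ s : Set V, IsEmpty (PrismStruct (G.induce s))

/-- `C` is the vertex set of a hole (an induced cycle on at least four vertices) of `G`. -/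
def IsHole {V : Type*} (G : SimpleGraph V) (C : Set V) : Prop :=
  ∃ (v : V) (w : G.Walk v v), w.IsCycle ∧ 4 ≤ w.length ∧
    (∀ x, x ∈ C ↔ x ∈ w.support) ∧
    (∀ x ∈ C, ∀ y ∈ C, G.Adj x y → s(x, y) ∈ w.edges)

/-- `G` contains no induced boat: no hole together with a vertex having exactly four
consecutive neighbours on the hole. -/
def BoatFree {V : Type*} (G : SimpleGraph V) : Prop :=
  ¬ ∃ (C : Set V) (v v₀ x₁ x₂ x₃ x₄ : V) (w : G.Walk v₀ v₀),
      w.IsCycle ∧ 4 ≤ w.length ∧ (∀ x, x ∈ C ↔ x ∈ w.support) ∧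
      (∀ x ∈ C, ∀ y ∈ C, G.Adj x y → s(x, y) ∈ w.edges) ∧
      v ∉ C ∧ [x₁, x₂, x₃, x₄].Nodup ∧
      s(x₁, x₂) ∈ w.edges ∧ s(x₂, x₃) ∈ w.edges ∧ s(x₃, x₄) ∈ w.edges ∧
      {x ∈ C | G.Adj v x} = {x₁, x₂, x₃, x₄}

/-- `G` contains no induced 4-wheel: no induced four-cycle together with a vertex adjacent
to all four of its vertices. -/
def FourWheelFree {V : Type*} (G : SimpleGraph V) : Prop :=
  ¬ ∃ v a b c d : V, a ≠ b ∧ a ≠ c ∧ a ≠ d ∧ b ≠ c ∧ b ≠ d ∧ c ≠ d ∧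
      G.Adj a b ∧ G.Adj b c ∧ G.Adj c d ∧ G.Adj d a ∧ ¬ G.Adj a c ∧ ¬ G.Adj b d ∧
      G.Adj v a ∧ G.Adj v b ∧ G.Adj v c ∧ G.Adj v d

/-- The subgraph of `G` induced on `T` is a confluence of `{x, y, z}`. -/
def IsConfluence {V : Type*} (G : SimpleGraph V) (T : Set V) (x y z : V) : Prop :=
  (∃ (c : V) (px : G.Walk c x) (py : G.Walk c y) (pz : G.Walk c z),
    px.IsPath ∧ py.IsPath ∧ pz.IsPath ∧
    (∀ v, v ∈ px.support → v ∈ py.support → v = c) ∧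
    (∀ v, v ∈ px.support → v ∈ pz.support → v = c) ∧
    (∀ v, v ∈ py.support → v ∈ pz.support → v = c) ∧
    (∀ v, v ∈ T ↔ (v ∈ px.support ∨ v ∈ py.support ∨ v ∈ pz.support)) ∧
    (∀ a ∈ T, ∀ b ∈ T, G.Adj a b →
      s(a, b) ∈ px.edges ∨ s(a, b) ∈ py.edges ∨ s(a, b) ∈ pz.edges))
  ∨
  (∃ (x' y' z' : V) (px : G.Walk x' x) (py : G.Walk y' y) (pz : G.Walk z' z),
    px.IsPath ∧ py.IsPath ∧ pz.IsPath ∧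
    G.Adj x' y' ∧ G.Adj y' z' ∧ G.Adj x' z' ∧
    (∀ v, v ∈ px.support → v ∉ py.support) ∧
    (∀ v, v ∈ px.support → v ∉ pz.support) ∧
    (∀ v, v ∈ py.support → v ∉ pz.support) ∧
    (∀ v, v ∈ T ↔ (v ∈ px.support ∨ v ∈ py.support ∨ v ∈ pz.support)) ∧
    (∀ a ∈ T, ∀ b ∈ T, G.Adj a b →
      s(a, b) ∈ px.edges ∨ s(a, b) ∈ py.edges ∨ s(a, b) ∈ pz.edges ∨
      s(a, b) = s(x', y') ∨ s(a, b) = s(y', z') ∨ s(a, b) = s(x', z')))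

/-- `D` is the vertex set of a connected component of the subgraph of `K` induced on `A`. -/
def IsCompOf {V : Type*} (K : SimpleGraph V) (A : Set V) (D : Set V) : Prop :=
  D ⊆ A ∧ D.Nonempty ∧ (K.induce D).Connected ∧
    ∀ x ∈ D, ∀ y ∈ A, K.Adj x y → y ∈ D

/-- `D` is (the vertex set of) a link of the square `u 0, u 1, u 2, u 3` in `K`: an induced
path whose ends attach to the square as prescribed and whose interior has no neighbour in
the square. -/
def IsLink {V : Type*} (K : SimpleGraph V) (u : Fin 4 → V) (D : Set V) : Prop :=
  ∃ (p p' : V) (w : K.Walk p p'), w.IsPath ∧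
    (∀ x, x ∈ D ↔ x ∈ w.support) ∧
    (∀ x ∈ D, ∀ y ∈ D, K.Adj x y → s(x, y) ∈ w.edges) ∧
    (∀ v ∈ w.support, v ≠ p → v ≠ p' → ∀ i, ¬ K.Adj v (u i)) ∧
    ((p = p' ∧ ∀ i, K.Adj p (u i)) ∨
     ({i | K.Adj p (u i)} = {0, 1} ∧ {i | K.Adj p' (u i)} = {2, 3}) ∨
     ({i | K.Adj p (u i)} = {0, 3} ∧ {i | K.Adj p' (u i)} = {1, 2}))

/-- `K` is a rich square: it contains an induced square `S` such that `K ∖ S` has at least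
two connected components and every such component is a link of `S`. -/
def IsRichSquare {V : Type*} (K : SimpleGraph V) : Prop :=
  ∃ u : Fin 4 → V, Function.Injective u ∧
    K.Adj (u 0) (u 1) ∧ K.Adj (u 1) (u 2) ∧ K.Adj (u 2) (u 3) ∧ K.Adj (u 3) (u 0) ∧
    ¬ K.Adj (u 0) (u 2) ∧ ¬ K.Adj (u 1) (u 3) ∧
    (∃ D₁ D₂ : Set V, IsCompOf K {v | v ∉ Set.range u} D₁ ∧
      IsCompOf K {v | v ∉ Set.range u} D₂ ∧ D₁ ≠ D₂) ∧
    (∀ D : Set V, IsCompOf K {v | v ∉ Set.range u} D → IsLink K u D)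

/-- Every rich square has chromatic number at most 4. -/
lemma path_two_colorable {V : Type*} (K : SimpleGraph V) :
    ∀ {a b : V} (w : K.Walk a b), w.IsPath →
      ∃ f : V → Bool, ∀ x y, s(x, y) ∈ w.edges → f x ≠ f y := by
  classical
  intro a b w
  induction w with
  | nil => exact fun _ => ⟨fun _ => true, by simp⟩
  | @cons a c b h p ih =>
    intro hp
    rw [Walk.cons_isPath_iff] at hp
    obtain ⟨f, hf⟩ := ih hp.1
    refine ⟨Function.update f a (!f c), ?_⟩
    intro x y hxy
    rw [Walk.edges_cons, List.mem_cons] at hxy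
    rcases hxy with hxy | hxy
    · have hac : a ≠ c := h.ne
      rcases Sym2.eq_iff.mp hxy with ⟨hx, hy⟩ | ⟨hx, hy⟩
      · subst hx; subst hy
        rw [Function.update_self, Function.update_of_ne hac.symm]
        simp
      · subst hx; subst hy
        rw [Function.update_self, Function.update_of_ne hac.symm]
        simp
    · have hx : x ∈ p.support := p.fst_mem_support_of_mem_edges hxy
      have hy : y ∈ p.support := p.snd_mem_support_of_mem_edges hxy
      have hxa : x ≠ a := fun h' => hp.2 (by rw [← h']; exact hx)
      have hya : y ≠ a := fun h' => hp.2 (by rw [← h']; exact hy)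
      rw [Function.update_of_ne hxa, Function.update_of_ne hya]
      exact hf x y hxy

lemma reach_induce {V : Type*} (K : SimpleGraph V) (s t : Set V) :
    ∀ {a b : s} (w : (K.induce s).Walk a b)
      (_ : ∀ v ∈ w.support, (v : V) ∈ t) (ha : (a : V) ∈ t) (hb : (b : V) ∈ t),
      (K.induce t).Reachable ⟨a, ha⟩ ⟨b, hb⟩ := by
  intro a b w
  induction w with
  | nil => intro _ ha hb; exact Reachable.refl _
  | @cons a c b h p ih =>
    intro hsup ha hb
    have hc : (c : V) ∈ t := hsup c (by simp)
    have hadj : (K.induce t).Adj ⟨a, ha⟩ ⟨c, hc⟩ := by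
      simpa using h
    exact hadj.reachable.trans (ih (fun v hv => hsup v (by simp [hv])) hc hb)

theorem richSquare_chromaticNumber_le_four {V : Type*} (K : SimpleGraph V)
    (hK : IsRichSquare K) : K.chromaticNumber ≤ 4 := by
  classical
  obtain ⟨u, huinj, h01, h12, h23, h30, h02, h13, -, hlink⟩ := hK
  set A : Set V := {v | v ∉ Set.range u} with hAdef
  -- the reachability class of `v` inside the induced graph on `A`
  let D : V → Set V := fun v =>
    {w | ∃ (hv : v ∈ A) (hw : w ∈ A), (K.induce A).Reachable ⟨v, hv⟩ ⟨w, hw⟩}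
  have hmemD : ∀ v (hv : v ∈ A), v ∈ D v := fun v hv => ⟨hv, hv, Reachable.refl _⟩
  have hDsub : ∀ v, D v ⊆ A := fun v w hw => hw.2.1
  have hclosed : ∀ v, ∀ x ∈ D v, ∀ y ∈ A, K.Adj x y → y ∈ D v := by
    rintro v x ⟨hv, hx, hr⟩ y hy hadj
    exact ⟨hv, hy, hr.trans (Adj.reachable (by simpa using hadj))⟩
  have hDeq : ∀ x y, x ∈ A → y ∈ A → K.Adj x y → D x = D y := by
    intro x y hx hy hadj
    have hxy : (K.induce A).Reachable ⟨x, hx⟩ ⟨y, hy⟩ :=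
      Adj.reachable (by simpa using hadj)
    ext w
    simp only [D, Set.mem_setOf_eq]
    constructor
    · rintro ⟨h1, hw, hr⟩; exact ⟨hy, hw, hxy.symm.trans hr⟩
    · rintro ⟨h1, hw, hr⟩; exact ⟨hx, hw, hxy.trans hr⟩
  have hcomp : ∀ v (hv : v ∈ A), IsCompOf K A (D v) := by
    intro v hv
    refine ⟨hDsub v, ⟨v, hmemD v hv⟩, ?_, hclosed v⟩
    rw [connected_iff]
    refine ⟨?_, ⟨⟨v, hmemD v hv⟩⟩⟩
    · -- preconnected
      rintro ⟨x, hx⟩ ⟨y, hy⟩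
      have key : ∀ z (hz : z ∈ D v),
          (K.induce (D v)).Reachable ⟨v, hmemD v hv⟩ ⟨z, hz⟩ := by
        intro z hz
        obtain ⟨h1, hzA, hr⟩ : ∃ (_ : v ∈ A) (hw : z ∈ A),
            (K.induce A).Reachable ⟨v, hv⟩ ⟨z, hw⟩ := hz
        obtain ⟨w⟩ := hr
        have hsup : ∀ s ∈ w.support, (s : V) ∈ D v := by
          intro s hs
          exact ⟨hv, s.2, (w.takeUntil s hs).reachable⟩
        exact reach_induce K A (D v) w hsup (hmemD v hv) ⟨hv, hzA, ⟨w⟩⟩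
      exact (key x hx).symm.trans (key y hy)
  have hexists_f : ∀ s : Set V, IsCompOf K A s → ∃ f : V → Bool,
      ∀ x ∈ s, ∀ y ∈ s, K.Adj x y → f x ≠ f y := by
    intro s hs
    obtain ⟨p, p', w, hwp, hsupp, hedge, -, -⟩ := hlink s hs
    obtain ⟨f, hf⟩ := path_two_colorable K w hwp
    exact ⟨f, fun x hx y hy hadj => hf x y (hedge x hx y hy hadj)⟩
  let F : Set V → V → Bool := fun s =>
    if h : IsCompOf K A s then (hexists_f s h).choose else fun _ => true
  have hF : ∀ s (h : IsCompOf K A s), ∀ x ∈ s, ∀ y ∈ s, K.Adj x y → F s x ≠ F s y := by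
    intro s h
    have : F s = (hexists_f s h).choose := dif_pos h
    rw [this]
    exact (hexists_f s h).choose_spec
  let col : V → Fin 4 := fun v =>
    if v = u 0 ∨ v = u 2 then 0
    else if v = u 1 ∨ v = u 3 then 1
    else if F (D v) v then 2 else 3
  have hne : ∀ i j : Fin 4, i ≠ j → u i ≠ u j := fun i j h e => h (huinj e)
  have hc0 : col (u 0) = 0 := if_pos (Or.inl rfl)
  have hc2 : col (u 2) = 0 := if_pos (Or.inr rfl)
  have hc1 : col (u 1) = 1 := by
    have hn : ¬(u 1 = u 0 ∨ u 1 = u 2) := by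
      rintro (h | h)
      exacts [hne 1 0 (by decide) h, hne 1 2 (by decide) h]
    show (if u 1 = u 0 ∨ u 1 = u 2 then (0 : Fin 4) else if u 1 = u 1 ∨ u 1 = u 3 then 1
      else if F (D (u 1)) (u 1) then 2 else 3) = 1
    rw [if_neg hn, if_pos (Or.inl rfl)]
  have hc3 : col (u 3) = 1 := by
    have hn : ¬(u 3 = u 0 ∨ u 3 = u 2) := by
      rintro (h | h)
      exacts [hne 3 0 (by decide) h, hne 3 2 (by decide) h]
    show (if u 3 = u 0 ∨ u 3 = u 2 then (0 : Fin 4) else if u 3 = u 1 ∨ u 3 = u 3 then 1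
      else if F (D (u 3)) (u 3) then 2 else 3) = 1
    rw [if_neg hn, if_pos (Or.inr rfl)]
  have hrange : ∀ v, v ∉ A → v = u 0 ∨ v = u 1 ∨ v = u 2 ∨ v = u 3 := by
    intro v hv
    have : v ∈ Set.range u := by
      by_contra h
      exact hv h
    obtain ⟨i, hi⟩ := this
    fin_cases i <;> simp_all
  have hcolA : ∀ v ∈ A, col v = if F (D v) v then 2 else 3 := by
    intro v hv
    have hvnr : v ∉ Set.range u := hv
    have h1 : ¬(v = u 0 ∨ v = u 2) := by
      rintro (rfl | rfl) <;> exact hvnr (by simp)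
    have h2 : ¬(v = u 1 ∨ v = u 3) := by
      rintro (rfl | rfl) <;> exact hvnr (by simp)
    simp only [col, if_neg h1, if_neg h2]
  have hcol : ∀ x y, K.Adj x y → col x ≠ col y := by
    intro x y hadj
    by_cases hx : x ∈ A <;> by_cases hy : y ∈ A
    · -- both in components
      have hDxy : D x = D y := hDeq x y hx hy hadj
      have hxD : x ∈ D x := hmemD x hx
      have hyD : y ∈ D x := hclosed x x hxD y hy hadj
      have hFxy := hF (D x) (hcomp x hx) x hxD y hyD hadj
      rw [hcolA x hx, hcolA y hy, ← hDxy]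
      cases hbx : F (D x) x <;> cases hby : F (D x) y <;>
        first
          | exact absurd (hbx.trans hby.symm) hFxy
          | decide
    · rw [hcolA x hx]
      rcases hrange y hy with rfl | rfl | rfl | rfl <;>
        rw [show col _ = _ from by first | exact hc0 | exact hc1 | exact hc2 | exact hc3] <;>
        cases hbx : F (D x) x <;> decide
    · rw [hcolA y hy]
      rcases hrange x hx with rfl | rfl | rfl | rfl <;>
        rw [show col _ = _ from by first | exact hc0 | exact hc1 | exact hc2 | exact hc3] <;>
        cases hby : F (D y) y <;> decide
    · rcases hrange x hx with rfl | rfl | rfl | rfl <;>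
        rcases hrange y hy with rfl | rfl | rfl | rfl <;>
        first
          | exact (hadj.ne rfl).elim
          | exact (h02 hadj).elim
          | exact (h02 hadj.symm).elim
          | exact (h13 hadj).elim
          | exact (h13 hadj.symm).elim
          | (simp only [hc0, hc1, hc2, hc3]; decide)
  have hcolorable : K.Colorable 4 := ⟨Coloring.mk col fun {a b} h => hcol a b h⟩
  exact_mod_cast hcolorable.chromaticNumber_le
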